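/- Under a completely randomized design, the joint exposure probability of two units satisfies: if T is drawn uniformly at random from the subsets of {1,…,N} of size N_t (with N_t ≤ N), and S₁, S₂, A₁, A₂ are fixed subsets with A₁ ⊆ S₁, A₂ ⊆ S₂, then (i) if the two exposures are compatible, i.e. A₁ ∩ S₂ = A₂ ∩ S₁, and |A₁ ∪ A₂| ≤ N_t, then P(T ∩ S₁ = A₁ and T ∩ S₂ = A₂) = C(N − |S₁ ∪ S₂|, N_t − |A₁ ∪ A₂|) / C(N, N_t); and (ii) if A₁ ∩ S₂ ≠ A₂ ∩ S₁ (incompatible exposures), then P(T ∩ S₁ = A₁ and T ∩ S₂ = A₂) = 0. -/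

import Mathlib

open scoped ENNReal

lemma count_inter_eq (N Nt : ℕ) (S A : Finset (Fin N)) (hA : A ⊆ S) (hle : A.card ≤ Nt) :
    ((Finset.powersetCard Nt (Finset.univ : Finset (Fin N))).filter
        (fun T => T ∩ S = A)).card = Nat.choose (N - S.card) (Nt - A.card) := by
  have h := Finset.card_bij' (s := (Finset.powersetCard Nt (Finset.univ : Finset (Fin N))).filter
        (fun T => T ∩ S = A)) (t := Finset.powersetCard (Nt - A.card) Sᶜ)
    (fun T _ => T \ S) (fun B _ => A ∪ B)
    (by
      intro T hT
      simp only [Finset.mem_filter, Finset.mem_powersetCard] at hT ⊢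
      obtain ⟨⟨-, hcard⟩, hTS⟩ := hT
      constructor
      · intro x hx
        simp only [Finset.mem_sdiff] at hx
        simp [Finset.mem_compl, hx.2]
      · have h1 : T \ S = T \ (T ∩ S) := by
          ext x; simp only [Finset.mem_sdiff, Finset.mem_inter]; tauto
        rw [h1, Finset.card_sdiff_of_subset Finset.inter_subset_left, hTS, hcard]
    )
    (by
      intro B hB
      simp only [Finset.mem_powersetCard] at hB
      obtain ⟨hBS, hBcard⟩ := hB
      have hdisj : Disjoint A B := by
        refine Finset.disjoint_left.2 fun x hxA hxB => ?_
        have := hBS hxB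
        simp only [Finset.mem_compl] at this
        exact this (hA hxA)
      simp only [Finset.mem_filter, Finset.mem_powersetCard]
      refine ⟨⟨Finset.subset_univ _, ?_⟩, ?_⟩
      · rw [Finset.card_union_of_disjoint hdisj, hBcard]
        omega
      · ext x
        simp only [Finset.mem_inter, Finset.mem_union]
        constructor
        · rintro ⟨hx1 | hx1, hx2⟩
          · exact hx1
          · exact absurd hx2 (by simpa using hBS hx1)
        · intro hx; exact ⟨Or.inl hx, hA hx⟩
    )
    (by
      intro T hT
      simp only [Finset.mem_filter] at hT
      have h2 := hT.2
      ext x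
      simp only [Finset.mem_union, Finset.mem_sdiff, ← h2, Finset.mem_inter]
      tauto
    )
    (by
      intro B hB
      simp only [Finset.mem_powersetCard] at hB
      ext x
      simp only [Finset.mem_sdiff, Finset.mem_union]
      constructor
      · rintro ⟨hx1 | hx1, hx2⟩
        · exact absurd (hA hx1) hx2
        · exact hx1
      · intro hx
        have := hB.1 hx
        simp only [Finset.mem_compl] at this
        exact ⟨Or.inr hx, this⟩
    )
  rw [h, Finset.card_powersetCard, Finset.card_compl, Fintype.card_fin]

/-- **Joint exposure probability under complete randomization.**
If `T` is drawn uniformly at random from the subsets of `{1,…,N}` of size `Nt`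
(with `Nt ≤ N`), and `S₁, S₂, A₁, A₂` are fixed with `A₁ ⊆ S₁`, `A₂ ⊆ S₂`, then
(i) if the exposures are compatible (`A₁ ∩ S₂ = A₂ ∩ S₁`) and `|A₁ ∪ A₂| ≤ Nt`,
`P(T ∩ S₁ = A₁ ∧ T ∩ S₂ = A₂) = C(N − |S₁ ∪ S₂|, Nt − |A₁ ∪ A₂|) / C(N, Nt)`;
(ii) if `A₁ ∩ S₂ ≠ A₂ ∩ S₁` (incompatible exposures), this probability is `0`. -/
theorem joint_exposure_probability_completely_randomized
    (N Nt : ℕ) (hNt : Nt ≤ N)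
    (S₁ S₂ A₁ A₂ : Finset (Fin N)) (hA₁ : A₁ ⊆ S₁) (hA₂ : A₂ ⊆ S₂)
    (hne : (Finset.powersetCard Nt (Finset.univ : Finset (Fin N))).Nonempty) :
    (A₁ ∩ S₂ = A₂ ∩ S₁ → (A₁ ∪ A₂).card ≤ Nt →
      (@PMF.toMeasure (Finset (Fin N)) ⊤ (PMF.uniformOfFinset _ hne))
          {T : Finset (Fin N) | T ∩ S₁ = A₁ ∧ T ∩ S₂ = A₂}
        = (Nat.choose (N - (S₁ ∪ S₂).card) (Nt - (A₁ ∪ A₂).card) : ℝ≥0∞)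
            / (Nat.choose N Nt : ℝ≥0∞))
    ∧ (A₁ ∩ S₂ ≠ A₂ ∩ S₁ →
      (@PMF.toMeasure (Finset (Fin N)) ⊤ (PMF.uniformOfFinset _ hne))
          {T : Finset (Fin N) | T ∩ S₁ = A₁ ∧ T ∩ S₂ = A₂} = 0) := by
  have key : (@PMF.toMeasure (Finset (Fin N)) ⊤ (PMF.uniformOfFinset _ hne))
          {T : Finset (Fin N) | T ∩ S₁ = A₁ ∧ T ∩ S₂ = A₂}
      = ((Finset.powersetCard Nt (Finset.univ : Finset (Fin N))).filter
          (fun T => T ∩ S₁ = A₁ ∧ T ∩ S₂ = A₂)).card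
        / ((Finset.powersetCard Nt (Finset.univ : Finset (Fin N))).card : ℝ≥0∞) := by
    rw [@PMF.toMeasure_uniformOfFinset_apply (Finset (Fin N)) _ hne
      {T : Finset (Fin N) | T ∩ S₁ = A₁ ∧ T ∩ S₂ = A₂} ⊤ trivial]
    simp only [Set.mem_setOf_eq]
  constructor
  · intro hcompat hle
    have hequiv : ∀ T : Finset (Fin N),
        (T ∩ S₁ = A₁ ∧ T ∩ S₂ = A₂) ↔ T ∩ (S₁ ∪ S₂) = A₁ ∪ A₂ := by
      intro T
      constructor
      · rintro ⟨h1, h2⟩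
        rw [Finset.inter_union_distrib_left, h1, h2]
      · intro h
        have h1 : T ∩ S₁ = A₁ := by
          have : T ∩ S₁ = (T ∩ (S₁ ∪ S₂)) ∩ S₁ := by
            rw [Finset.inter_assoc, Finset.union_inter_cancel_left]
          rw [this, h, Finset.union_inter_distrib_right, ← hcompat]
          have e1 : A₁ ∩ S₁ = A₁ := Finset.inter_eq_left.2 hA₁
          have e2 : A₁ ∩ S₂ ⊆ A₁ := Finset.inter_subset_left
          rw [e1, Finset.union_eq_left.2 e2]
        have h2 : T ∩ S₂ = A₂ := by
          have : T ∩ S₂ = (T ∩ (S₁ ∪ S₂)) ∩ S₂ := by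
            rw [Finset.inter_assoc, Finset.union_inter_cancel_right]
          rw [this, h, Finset.union_inter_distrib_right, hcompat]
          have e1 : A₂ ∩ S₂ = A₂ := Finset.inter_eq_left.2 hA₂
          have e2 : A₂ ∩ S₁ ⊆ A₂ := Finset.inter_subset_left
          rw [e1, Finset.union_eq_right.2 e2]
        exact ⟨h1, h2⟩
    rw [key]
    have hfc : ((Finset.powersetCard Nt (Finset.univ : Finset (Fin N))).filter
          (fun T => T ∩ S₁ = A₁ ∧ T ∩ S₂ = A₂))
        = ((Finset.powersetCard Nt (Finset.univ : Finset (Fin N))).filter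
          (fun T => T ∩ (S₁ ∪ S₂) = A₁ ∪ A₂)) := by
      apply Finset.filter_congr
      intro T _
      exact iff_iff_eq.mp (hequiv T) ▸ Iff.rfl
    rw [hfc, count_inter_eq N Nt (S₁ ∪ S₂) (A₁ ∪ A₂) (Finset.union_subset_union hA₁ hA₂) hle,
      Finset.card_powersetCard, Finset.card_univ, Fintype.card_fin]
  · intro hincompat
    rw [key]
    have : ((Finset.powersetCard Nt (Finset.univ : Finset (Fin N))).filter
          (fun T => T ∩ S₁ = A₁ ∧ T ∩ S₂ = A₂)) = ∅ := by
      apply Finset.filter_eq_empty_iff.2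
      rintro T _ ⟨h1, h2⟩
      apply hincompat
      rw [← h1, ← h2, Finset.inter_assoc, Finset.inter_assoc, Finset.inter_comm S₁ S₂]
    rw [this]
    simp
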